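/- Let F be a field of characteristic zero, q ∈ ℚ ∖ {0,1,−1}, A = [[1,0,0],[1,q,0],[1,0,q⁻¹]] ∈ SL(3,F), and Σ = {Aᵏ : k ∈ ℤ}. If g ∈ SL(3,F) satisfies gΣg⁻¹ ∩ Σ ≠ {1}, then gAg⁻¹ equals A or A⁻¹; in particular g normalizes Σ, i.e. gΣg⁻¹ = Σ. More precisely: if k ∈ ℤ ∖ {0} and gAᵏg⁻¹ = Aᵐ for some m ∈ ℤ, then m = k or m = −k, and gAg⁻¹ ∈ {A, A⁻¹}. -/

import Mathlib

open Matrix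

/-- The matrix `A = [[1,0,0],[1,q,0],[1,0,q⁻¹]]` as an element of `SL(3,F)`,
for a field `F` of characteristic zero and `q ∈ ℚ`, `q ≠ 0`. -/
def AmatSL (F : Type) [Field F] [CharZero F] (q : ℚ) (hq : q ≠ 0) :
    Matrix.SpecialLinearGroup (Fin 3) F :=
  ⟨!![1, 0, 0; 1, (q : F), 0; 1, 0, (q : F)⁻¹], by
    have hq' : (q : F) ≠ 0 := by exact_mod_cast hq
    simp [Matrix.det_fin_three]
    field_simp⟩

/- ### Auxiliary facts about integer powers of a rational number -/

lemma abs_zpow_rat (q : ℚ) (n : ℤ) : |q ^ n| = |q| ^ n := map_zpow₀ (absHom : ℚ →*₀ ℚ) q n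

lemma rat_zpow_eq_iff {q : ℚ} (hq0 : q ≠ 0) (hq1 : q ≠ 1) (hqm1 : q ≠ -1) {a b : ℤ}
    (h : q ^ a = q ^ b) : a = b := by
  have ha0 : (0:ℚ) < |q| := abs_pos.mpr hq0
  have ha1 : |q| ≠ 1 := by
    intro hh
    rcases abs_eq_abs.mp (show |q| = |(1:ℚ)| by rw [abs_one]; exact hh) with h | h <;>
      [exact hq1 h; exact hqm1 h]
  exact zpow_right_injective₀ ha0 ha1
    (show |q| ^ a = |q| ^ b by rw [← abs_zpow_rat, ← abs_zpow_rat, h])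

lemma rat_cases {q : ℚ} (hq0 : q ≠ 0) (hq1 : q ≠ 1) (hqm1 : q ≠ -1) {k m : ℤ}
    (h : q ^ m + q ^ (-m) = q ^ k + q ^ (-k)) : m = k ∨ m = -k := by
  have hm : q ^ m ≠ 0 := zpow_ne_zero _ hq0
  have hk' : q ^ k ≠ 0 := zpow_ne_zero _ hq0
  rw [_root_.zpow_neg, _root_.zpow_neg] at h
  have hxy : (q ^ m - q ^ k) * (q ^ m * q ^ k - 1) = 0 := by
    field_simp at h
    linear_combination h
  rcases mul_eq_zero.mp hxy with h1 | h1
  · exact Or.inl (rat_zpow_eq_iff hq0 hq1 hqm1 (sub_eq_zero.mp h1))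
  · right
    have : q ^ (m + k) = q ^ (0:ℤ) := by
      rw [zpow_add₀ hq0, zpow_zero]; linarith [sub_eq_zero.mp h1]
    have := rat_zpow_eq_iff hq0 hq1 hqm1 this
    omega

/- ### The diagonalization of `A` -/

section
variable (F : Type) [Field F] [CharZero F] (q : ℚ) (hq : q ≠ 0)

/-- the diagonal matrix `diag(1, q^m, q^(-m))` in `SL(3,F)` -/
def DZ (m : ℤ) : Matrix.SpecialLinearGroup (Fin 3) F :=
  ⟨Matrix.diagonal ![1, (q:F) ^ m, (q:F) ^ (-m)], by
    have hqF : (q:F) ≠ 0 := by exact_mod_cast hq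
    simp only [Matrix.det_diagonal, Fin.prod_univ_three, Matrix.cons_val_zero,
      Matrix.cons_val_one, Matrix.head_cons, Matrix.cons_val_two, Matrix.tail_cons, one_mul]
    rw [← zpow_add₀ hqF]; simp⟩

lemma DZ_mul (a b : ℤ) : DZ F q hq a * DZ F q hq b = DZ F q hq (a + b) := by
  have hqF : (q:F) ≠ 0 := by exact_mod_cast hq
  apply Subtype.ext
  show Matrix.diagonal _ * Matrix.diagonal _ = Matrix.diagonal _
  rw [Matrix.diagonal_mul_diagonal]
  apply congrArg
  funext i
  fin_cases i <;> simp
  · rw [← zpow_add₀ hqF]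
  · rw [← _root_.zpow_neg, ← _root_.zpow_neg, ← zpow_add₀ hqF]; ring_nf

lemma DZ_zero : DZ F q hq 0 = 1 := by
  apply Subtype.ext
  show Matrix.diagonal _ = _
  have : ![(1:F), (q:F) ^ (0:ℤ), (q:F) ^ (-(0:ℤ))] = 1 := by
    funext i; fin_cases i <;> simp
  rw [this]; exact Matrix.diagonal_one

lemma DZ_inv : (DZ F q hq 1)⁻¹ = DZ F q hq (-1) :=
  inv_eq_of_mul_eq_one_right (by rw [DZ_mul]; simpa using DZ_zero F q hq)

lemma DZ_zpow (m : ℤ) : (DZ F q hq 1) ^ m = DZ F q hq m := by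
  induction m using Int.induction_on with
  | zero => rw [zpow_zero, DZ_zero]
  | succ n ih => rw [_root_.zpow_add_one, ih, DZ_mul]
  | pred n ih =>
      rw [_root_.zpow_sub_one, ih, DZ_inv, DZ_mul, show -(n:ℤ) + -1 = -(n:ℤ) - 1 by omega]

/-- the conjugating matrix `P` -/
def PZ : Matrix.SpecialLinearGroup (Fin 3) F :=
  ⟨!![1, 0, 0; (1 - (q:F))⁻¹, 1, 0; (q:F) * ((q:F) - 1)⁻¹, 0, 1], by
    simp [Matrix.det_fin_three]⟩

lemma A_eq (hq1 : q ≠ 1) : AmatSL F q hq = PZ F q * DZ F q hq 1 * (PZ F q)⁻¹ := by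
  have hqF : (q:F) ≠ 0 := by exact_mod_cast hq
  have hqF1 : (q:F) ≠ 1 := by exact_mod_cast hq1
  have h1 : 1 - (q:F) ≠ 0 := fun h => hqF1 (by linear_combination -h)
  have h2 : (q:F) - 1 ≠ 0 := fun h => hqF1 (by linear_combination h)
  rw [eq_mul_inv_iff_mul_eq]
  apply Subtype.ext
  show (AmatSL F q hq).1 * (PZ F q).1 = (PZ F q).1 * (DZ F q hq 1).1
  ext i j
  rw [show (DZ F q hq 1).1 = Matrix.diagonal ![1, (q:F)^(1:ℤ), (q:F)^(-1:ℤ)] from rfl,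
    Matrix.mul_diagonal]
  fin_cases i <;> fin_cases j <;>
    simp [AmatSL, PZ, Matrix.mul_apply, Fin.sum_univ_three]
  all_goals field_simp
  all_goals ring

end

/- ### A commutation lemma for matrices commuting with diagonal matrices -/

lemma key_comm {F : Type} [Field F] (u : Matrix (Fin 3) (Fin 3) F) (d e dd ee : Fin 3 → F)
    (hcomm : u * Matrix.diagonal d = Matrix.diagonal e * u)
    (himp : ∀ i j, d j = e i → dd j = ee i) :
    u * Matrix.diagonal dd = Matrix.diagonal ee * u := by
  ext i j
  rw [Matrix.mul_diagonal, Matrix.diagonal_mul]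
  have h1 : u i j * d j = e i * u i j := by
    rw [← Matrix.mul_diagonal d u i j, hcomm, Matrix.diagonal_mul]
  by_cases hde : d j = e i
  · rw [himp i j hde, mul_comm]
  · have h0 : u i j = 0 := by
      rcases mul_eq_zero.mp (show u i j * (d j - e i) = 0 by rw [mul_sub, h1]; ring) with h | h
      · exact h
      · exact absurd (sub_eq_zero.mp h) hde
    simp [h0]

lemma himp_aux1 {F : Type} [Field F] (x y u v : F) (hx1 : x ≠ 1) (hy1 : y ≠ 1) (hxy : x ≠ y) :
    ∀ i j : Fin 3, ![1,x,y] j = ![1,x,y] i → ![1,u,v] j = ![1,u,v] i := by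
  intro i j
  fin_cases i <;> fin_cases j <;>
    simp [hx1, hy1, hxy, Ne.symm hx1, Ne.symm hy1, Ne.symm hxy]

lemma himp_aux2 {F : Type} [Field F] (x y u v : F) (hx1 : x ≠ 1) (hy1 : y ≠ 1) (hxy : x ≠ y) :
    ∀ i j : Fin 3, ![1,x,y] j = ![1,y,x] i → ![1,u,v] j = ![1,v,u] i := by
  intro i j
  fin_cases i <;> fin_cases j <;>
    simp [hx1, hy1, hxy, Ne.symm hx1, Ne.symm hy1, Ne.symm hxy]

/-- Let `F` be a field of characteristic zero, `q ∈ ℚ ∖ {0,1,-1}`,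
`A` as above and `Σ = {Aᵏ : k ∈ ℤ}`.  If `g ∈ SL(3,F)` satisfies `g Aᵏ g⁻¹ = Aᵐ` with
`k ≠ 0`, then `m = k` or `m = -k`, `g A g⁻¹ ∈ {A, A⁻¹}`, and `g` normalizes `Σ`. -/
theorem conj_pow_Amat (F : Type) [Field F] [CharZero F]
    (q : ℚ) (hq0 : q ≠ 0) (hq1 : q ≠ 1) (hqm1 : q ≠ -1)
    (g : Matrix.SpecialLinearGroup (Fin 3) F) (k m : ℤ) (hk : k ≠ 0)
    (h : g * (AmatSL F q hq0) ^ k * g⁻¹ = (AmatSL F q hq0) ^ m) :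
    (m = k ∨ m = -k) ∧
    (g * AmatSL F q hq0 * g⁻¹ = AmatSL F q hq0 ∨
      g * AmatSL F q hq0 * g⁻¹ = (AmatSL F q hq0)⁻¹) ∧
    Subgroup.map (MulAut.conj g).toMonoidHom (Subgroup.zpowers (AmatSL F q hq0)) =
      Subgroup.zpowers (AmatSL F q hq0) := by
  have hqF : (q:F) ≠ 0 := by exact_mod_cast hq0
  set A := AmatSL F q hq0 with hAdef
  set P := PZ F q with hPdef
  set D := DZ F q hq0 with hDdef
  have hA : A = P * D 1 * P⁻¹ := A_eq F q hq0 hq1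
  set s : Matrix.SpecialLinearGroup (Fin 3) F := P⁻¹ * g * P with hsdef
  -- conjugation relation for the diagonal part
  have hs : s * D k * s⁻¹ = D m := by
    rw [hDdef, ← DZ_zpow F q hq0 k, ← DZ_zpow F q hq0 m]
    have h' := h
    rw [hA, conj_zpow, conj_zpow] at h'
    have e1 : s * (DZ F q hq0 1) ^ k * s⁻¹
        = P⁻¹ * (g * (P * (DZ F q hq0 1) ^ k * P⁻¹) * g⁻¹) * P := by
      rw [hsdef]; group
    rw [e1]
    rw [hDdef] at h'
    rw [h']; group
  have hsk : s * D k = D m * s := mul_inv_eq_iff_eq_mul.mp hs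
  have hmat : (s : Matrix (Fin 3) (Fin 3) F) * (D k : Matrix (Fin 3) (Fin 3) F)
      = (D m : Matrix (Fin 3) (Fin 3) F) * (s : Matrix (Fin 3) (Fin 3) F) := by
    rw [← Matrix.SpecialLinearGroup.coe_mul, ← Matrix.SpecialLinearGroup.coe_mul, hsk]
  -- traces give m = ± k
  have h3 : ((s⁻¹ : Matrix.SpecialLinearGroup (Fin 3) F) : Matrix (Fin 3) (Fin 3) F)
      * (s : Matrix (Fin 3) (Fin 3) F) = 1 := by
    rw [← Matrix.SpecialLinearGroup.coe_mul, inv_mul_cancel,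
      Matrix.SpecialLinearGroup.coe_one]
  have hDk : (D k : Matrix (Fin 3) (Fin 3) F)
      = Matrix.diagonal ![1, (q:F) ^ k, (q:F) ^ (-k)] := rfl
  have hDm : (D m : Matrix (Fin 3) (Fin 3) F)
      = Matrix.diagonal ![1, (q:F) ^ m, (q:F) ^ (-m)] := rfl
  have htr : Matrix.trace ((D m : Matrix (Fin 3) (Fin 3) F))
      = Matrix.trace ((D k : Matrix (Fin 3) (Fin 3) F)) := by
    have h2 : (D m : Matrix (Fin 3) (Fin 3) F)
        = (s : Matrix (Fin 3) (Fin 3) F) * (D k : Matrix (Fin 3) (Fin 3) F)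
          * ((s⁻¹ : Matrix.SpecialLinearGroup (Fin 3) F) : Matrix (Fin 3) (Fin 3) F) := by
      rw [← hs, Matrix.SpecialLinearGroup.coe_mul, Matrix.SpecialLinearGroup.coe_mul]
    rw [h2, mul_assoc, Matrix.trace_mul_comm, mul_assoc, h3, mul_one]
  have htr' : (1:F) + (q:F) ^ m + (q:F) ^ (-m) = 1 + (q:F) ^ k + (q:F) ^ (-k) := by
    rw [hDm, hDk, Matrix.trace_diagonal, Matrix.trace_diagonal] at htr
    simpa [Fin.sum_univ_three] using htr
  have hQ : q ^ m + q ^ (-m) = q ^ k + q ^ (-k) := by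
    have : ((q ^ m + q ^ (-m) : ℚ) : F) = ((q ^ k + q ^ (-k) : ℚ) : F) := by
      push_cast
      linear_combination htr'
    exact_mod_cast this
  have hmk : m = k ∨ m = -k := rat_cases hq0 hq1 hqm1 hQ
  -- inequalities between powers of q in F
  have hne : ∀ a b : ℤ, a ≠ b → (q:F) ^ a ≠ (q:F) ^ b := by
    intro a b hab hcon
    apply hab
    apply rat_zpow_eq_iff hq0 hq1 hqm1
    have : ((q ^ a : ℚ) : F) = ((q ^ b : ℚ) : F) := by push_cast; exact hcon
    exact_mod_cast this
  have hk1 : (q:F) ^ k ≠ 1 := by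
    have := hne k 0 hk; simpa using this
  have hkm1 : (q:F) ^ (-k) ≠ 1 := by
    have := hne (-k) 0 (by omega); simpa using this
  have hkk : (q:F) ^ k ≠ (q:F) ^ (-k) := hne k (-k) (by omega)
  -- conjugation sends A to A or A⁻¹
  have hD1 : (D 1 : Matrix (Fin 3) (Fin 3) F)
      = Matrix.diagonal ![1, (q:F) ^ (1:ℤ), (q:F) ^ (-1:ℤ)] := rfl
  have hDm1 : (D (-1) : Matrix (Fin 3) (Fin 3) F)
      = Matrix.diagonal ![1, (q:F) ^ (-1:ℤ), (q:F) ^ (1:ℤ)] := by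
    have : (D (-1) : Matrix (Fin 3) (Fin 3) F)
        = Matrix.diagonal ![1, (q:F) ^ (-1:ℤ), (q:F) ^ (-(-1):ℤ)] := rfl
    rw [this]; norm_num
  have hconj : g * A * g⁻¹ = A ∨ g * A * g⁻¹ = A⁻¹ := by
    rcases hmk with h' | h'
    · left
      rw [h'] at hmat
      have hc : (s : Matrix (Fin 3) (Fin 3) F)
          * Matrix.diagonal ![1, (q:F) ^ (1:ℤ), (q:F) ^ (-1:ℤ)]
          = Matrix.diagonal ![1, (q:F) ^ (1:ℤ), (q:F) ^ (-1:ℤ)]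
            * (s : Matrix (Fin 3) (Fin 3) F) := by
        apply key_comm _ ![1, (q:F) ^ k, (q:F) ^ (-k)] ![1, (q:F) ^ k, (q:F) ^ (-k)]
        · rw [← hDk]; exact hmat
        · exact fun i j => himp_aux1 _ _ _ _ hk1 hkm1 hkk i j
      have hcs : s * D 1 = D 1 * s := by
        apply Subtype.ext
        show (s : Matrix (Fin 3) (Fin 3) F) * (D 1 : Matrix (Fin 3) (Fin 3) F)
          = (D 1 : Matrix (Fin 3) (Fin 3) F) * (s : Matrix (Fin 3) (Fin 3) F)
        rw [hD1]
        exact hc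
      rw [hA]
      have e1 : g * (P * D 1 * P⁻¹) * g⁻¹ = P * (s * D 1 * s⁻¹) * P⁻¹ := by
        rw [hsdef]; group
      rw [e1, mul_inv_eq_iff_eq_mul.mpr hcs]
    · right
      rw [h'] at hmat
      have hDmk : (D (-k) : Matrix (Fin 3) (Fin 3) F)
          = Matrix.diagonal ![1, (q:F) ^ (-k), (q:F) ^ k] := by
        have : (D (-k) : Matrix (Fin 3) (Fin 3) F)
            = Matrix.diagonal ![1, (q:F) ^ (-k), (q:F) ^ (-(-k))] := rfl
        rw [this, neg_neg]
      have hc : (s : Matrix (Fin 3) (Fin 3) F)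
          * Matrix.diagonal ![1, (q:F) ^ (1:ℤ), (q:F) ^ (-1:ℤ)]
          = Matrix.diagonal ![1, (q:F) ^ (-1:ℤ), (q:F) ^ (1:ℤ)]
            * (s : Matrix (Fin 3) (Fin 3) F) := by
        apply key_comm _ ![1, (q:F) ^ k, (q:F) ^ (-k)] ![1, (q:F) ^ (-k), (q:F) ^ k]
        · rw [← hDk, ← hDmk]; exact hmat
        · exact fun i j => himp_aux2 _ _ _ _ hk1 hkm1 hkk i j
      have hcs : s * D 1 = D (-1) * s := by
        apply Subtype.ext
        show (s : Matrix (Fin 3) (Fin 3) F) * (D 1 : Matrix (Fin 3) (Fin 3) F)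
          = (D (-1) : Matrix (Fin 3) (Fin 3) F) * (s : Matrix (Fin 3) (Fin 3) F)
        rw [hD1, hDm1]
        exact hc
      have hinv : (D 1)⁻¹ = D (-1) := DZ_inv F q hq0
      rw [hA]
      have e1 : g * (P * D 1 * P⁻¹) * g⁻¹ = P * (s * D 1 * s⁻¹) * P⁻¹ := by
        rw [hsdef]; group
      rw [e1, mul_inv_eq_iff_eq_mul.mpr hcs, ← hinv,
        show (P * D 1 * P⁻¹)⁻¹ = P * (D 1)⁻¹ * P⁻¹ by group]
  refine ⟨hmk, hconj, ?_⟩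
  rw [MonoidHom.map_zpowers]
  have hco : (MulAut.conj g).toMonoidHom A = g * A * g⁻¹ := rfl
  rw [hco]
  rcases hconj with hc | hc
  · rw [hc]
  · rw [hc, Subgroup.zpowers_inv]
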